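/- In a linear finite-field deterministic network with N source nodes and a single destination d, if the rate tuple (R_1,…,R_N) ∈ ℝ_{≥0}^N is achievable, then for every nonempty subset S ⊆ {1,…,N} one has Σ_{i∈S} R_i ≤ rank(G_{S,S^c}), where the rank is taken over F_2. (Converse part of Theorem 1.) -/

import Mathlib

open Filter Topology

/-- The `q × q` down-shift matrix over `𝔽₂`: entry `(k, ℓ)` is `1` iff `k = ℓ + 1`. -/
def downShift (q : ℕ) : Matrix (Fin q) (Fin q) (ZMod 2) :=
  Matrix.of fun k l => if (k : ℕ) = (l : ℕ) + 1 then 1 else 0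

/-- A linear finite-field deterministic network with source nodes `1,…,N` (modeled as `Fin N`)
and a single destination `d` (modeled as `none : Option (Fin N)`).  Every edge `(i,j)` carries
an integer level `n i j ≤ q`, and the underlying directed graph is acyclic (it admits a
topological ordering). -/
structure LFFDNet (N q : ℕ) where
  E : Finset (Fin N × Option (Fin N))
  n : Fin N → Option (Fin N) → ℕ
  hq : 1 ≤ q
  hn : ∀ e ∈ E, n e.1 e.2 ≤ q
  acyclic : ∃ ρ : Option (Fin N) → ℕ, ∀ e ∈ E, ρ (some e.1) < ρ e.2

/-- The channel matrix of the link from node `i` to node `j`: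
`S^(q - n i j)` if `(i,j)` is an edge, and `0` otherwise. -/
def linkMat {N q : ℕ} (net : LFFDNet N q) (i : Fin N) (j : Option (Fin N)) :
    Matrix (Fin q) (Fin q) (ZMod 2) :=
  if (i, j) ∈ net.E then downShift q ^ (q - net.n i j) else 0

/-- The cut transfer matrix `G_{S,Sᶜ}` of a cut `S ⊆ {1,…,N}`: the block matrix whose
`(j, i)` block (for `j ∈ Sᶜ` — which always contains the destination — and `i ∈ S`)
is the channel matrix of the link from `i` to `j`. -/
def cutMatrix {N q : ℕ} (net : LFFDNet N q) (S : Finset (Fin N)) :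
    Matrix ((↥((S.image some)ᶜ)) × Fin q) ((↥S) × Fin q) (ZMod 2) :=
  Matrix.of fun jr ic => linkMat net ic.1.1 jr.1.1 jr.2 ic.2

/-- Cardinality `⌈2^(T·r)⌉` of the message set of a node with rate `r` and block length `T`. -/
noncomputable def msgCard (T : ℕ) (r : ℝ) : ℕ := ⌈(2 : ℝ) ^ ((T : ℝ) * r)⌉₊

/-- A `(T, R₁, …, R_N)` code: strictly causal encoders (the signal transmitted by node `i`
at time `t` depends on its message and on its received signals at times `< t`), and a decoder
at the destination mapping its `T` received signals to a tuple of message estimates. -/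
structure Code {N q : ℕ} (net : LFFDNet N q) (T : ℕ) (R : Fin N → ℝ) where
  enc : (i : Fin N) → (t : Fin T) → Fin (msgCard T (R i)) →
      ((s : Fin (t : ℕ)) → Fin q → ZMod 2) → (Fin q → ZMod 2)
  dec : (Fin T → Fin q → ZMod 2) → ((i : Fin N) → Fin (msgCard T (R i)))

/-- The signal transmitted by node `i` at time `t`, determined by the messages `w`, the
encoders, and the network equations. -/
noncomputable def transmit {N q : ℕ} (net : LFFDNet N q) {T : ℕ} {R : Fin N → ℝ}
    (C : Code net T R) (w : (i : Fin N) → Fin (msgCard T (R i))) :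
    (t : ℕ) → Fin N → (Fin q → ZMod 2)
  | t, i =>
    if h : t < T then
      C.enc i ⟨t, h⟩ (w i)
        (fun s => ∑ i' : Fin N, (linkMat net i' (some i)).mulVec (transmit net C w s i'))
    else 0
termination_by t _ => t
decreasing_by exact s.isLt

/-- The signal received by node `j` at time `t`:
`y_j[t] = ∑_{i : (i,j) ∈ E} S^(q - n i j) x_i[t]`. -/
noncomputable def receivedAt {N q : ℕ} (net : LFFDNet N q) {T : ℕ} {R : Fin N → ℝ}
    (C : Code net T R) (w : (i : Fin N) → Fin (msgCard T (R i)))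
    (j : Option (Fin N)) (t : ℕ) : Fin q → ZMod 2 :=
  ∑ i' : Fin N, (linkMat net i' j).mulVec (transmit net C w t i')

/-- The average probability of error of a code, for independent messages uniformly
distributed on the message sets. -/
noncomputable def Perr {N q : ℕ} (net : LFFDNet N q) {T : ℕ} {R : Fin N → ℝ}
    (C : Code net T R) : ℝ :=
  (Finset.univ.filter fun w : (i : Fin N) → Fin (msgCard T (R i)) =>
      C.dec (fun t => receivedAt net C w none t) ≠ w).card /
    (Fintype.card ((i : Fin N) → Fin (msgCard T (R i))) : ℝ)

/-- A nonnegative rate tuple is achievable if there is a sequence of codes whose block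
lengths tend to infinity and whose error probabilities tend to `0`. -/
def Achievable {N q : ℕ} (net : LFFDNet N q) (R : Fin N → ℝ) : Prop :=
  (∀ i, 0 ≤ R i) ∧
  ∃ (Tk : ℕ → ℕ) (Ck : (k : ℕ) → Code net (Tk k) R),
    Tendsto Tk atTop atTop ∧ Tendsto (fun k => Perr net (Ck k)) atTop (𝓝 0)

section AuxProof

variable {N q : ℕ} (net : LFFDNet N q) {T : ℕ} {R : Fin N → ℝ} (C : Code net T R)

lemma transmit_eq (w : (i : Fin N) → Fin (msgCard T (R i))) (t : ℕ) (i : Fin N) :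
    transmit net C w t i =
      if h : t < T then
        C.enc i ⟨t, h⟩ (w i)
          (fun s => ∑ i' : Fin N, (linkMat net i' (some i)).mulVec (transmit net C w s i'))
      else 0 := by
  rw [transmit]

lemma some_mem_compl {S : Finset (Fin N)} {i : Fin N} (hi : i ∉ S) :
    some i ∈ (S.image some)ᶜ := by
  simp only [Finset.mem_compl, Finset.mem_image, not_exists, not_and]
  intro a ha h
  exact hi ((Option.some_injective _ h) ▸ ha)

lemma transmit_congr (S : Finset (Fin N))
    (w w' : (i : Fin N) → Fin (msgCard T (R i)))
    (hout : ∀ i ∉ S, w i = w' i)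
    (hcut : ∀ (t : ℕ) (j : Option (Fin N)), j ∈ (S.image some)ᶜ →
      (∑ i ∈ S, (linkMat net i j).mulVec (transmit net C w t i)) =
      (∑ i ∈ S, (linkMat net i j).mulVec (transmit net C w' t i))) :
    ∀ t : ℕ, ∀ i ∉ S, transmit net C w t i = transmit net C w' t i := by
  intro t
  induction t using Nat.strong_induction_on with
  | _ t ih =>
    intro i hi
    rw [transmit_eq, transmit_eq]
    split
    · have harg : (fun s : Fin t => ∑ i' : Fin N,
            (linkMat net i' (some i)).mulVec (transmit net C w (s : ℕ) i'))
          = (fun s : Fin t => ∑ i' : Fin N,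
            (linkMat net i' (some i)).mulVec (transmit net C w' (s : ℕ) i')) := by
        funext s
        rw [← Finset.sum_add_sum_compl S, ← Finset.sum_add_sum_compl S
          (fun i' => (linkMat net i' (some i)).mulVec (transmit net C w' (s : ℕ) i'))]
        congr 1
        · exact hcut s (some i) (some_mem_compl hi)
        · exact Finset.sum_congr rfl fun i' hi' => by
            rw [ih s s.isLt i' (Finset.mem_compl.mp hi')]
      rw [hout i hi, harg]
    · rfl

lemma receivedAt_congr (S : Finset (Fin N))
    (w w' : (i : Fin N) → Fin (msgCard T (R i)))
    (hout : ∀ i ∉ S, w i = w' i)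
    (hcut : ∀ (t : ℕ) (j : Option (Fin N)), j ∈ (S.image some)ᶜ →
      (∑ i ∈ S, (linkMat net i j).mulVec (transmit net C w t i)) =
      (∑ i ∈ S, (linkMat net i j).mulVec (transmit net C w' t i)))
    (j : Option (Fin N)) (hj : j ∈ (S.image some)ᶜ) (t : ℕ) :
    receivedAt net C w j t = receivedAt net C w' j t := by
  unfold receivedAt
  rw [← Finset.sum_add_sum_compl S, ← Finset.sum_add_sum_compl S
    (fun i' => (linkMat net i' j).mulVec (transmit net C w' t i'))]
  congr 1
  · exact hcut t j hj
  · exact Finset.sum_congr rfl fun i' hi' => by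
      rw [transmit_congr net C S w w' hout hcut t i' (Finset.mem_compl.mp hi')]

end AuxProof
section AuxProof2

variable {N q : ℕ} (net : LFFDNet N q) {T : ℕ} {R : Fin N → ℝ} (C : Code net T R)

/-- The signal crossing the cut `S → Sᶜ` at time `t`, as a single vector. -/
noncomputable def cutsig (S : Finset (Fin N)) (w : (i : Fin N) → Fin (msgCard T (R i)))
    (t : ℕ) : ((↥((S.image some)ᶜ)) × Fin q) → ZMod 2 :=
  (cutMatrix net S).mulVec (fun ic => transmit net C w t ic.1.1 ic.2)

lemma cutsig_mem (S : Finset (Fin N)) (w : (i : Fin N) → Fin (msgCard T (R i))) (t : ℕ) :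
    cutsig net C S w t ∈ LinearMap.range (cutMatrix net S).mulVecLin :=
  ⟨_, Matrix.mulVecLin_apply _ _⟩

lemma cutsig_apply (S : Finset (Fin N)) (w : (i : Fin N) → Fin (msgCard T (R i)))
    (t : ℕ) (j : ↥((S.image some)ᶜ)) (r : Fin q) :
    cutsig net C S w t (j, r) =
      (∑ i ∈ S, (linkMat net i (j : Option (Fin N))).mulVec (transmit net C w t i)) r := by
  rw [Finset.sum_apply, ← Finset.sum_coe_sort S]
  simp only [cutsig, Matrix.mulVec, dotProduct, cutMatrix, Matrix.of_apply,
    Fintype.sum_prod_type]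

lemma cut_sums_eq_of_cutsig_eq (S : Finset (Fin N))
    (w w' : (i : Fin N) → Fin (msgCard T (R i)))
    (h : ∀ t : ℕ, cutsig net C S w t = cutsig net C S w' t) :
    ∀ (t : ℕ) (j : Option (Fin N)), j ∈ (S.image some)ᶜ →
      (∑ i ∈ S, (linkMat net i j).mulVec (transmit net C w t i)) =
      (∑ i ∈ S, (linkMat net i j).mulVec (transmit net C w' t i)) := by
  intro t j hj
  funext r
  rw [← cutsig_apply net C S w t ⟨j, hj⟩ r, ← cutsig_apply net C S w' t ⟨j, hj⟩ r, h t]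

lemma good_card_le (S : Finset (Fin N)) :
    (Finset.univ.filter fun w : (i : Fin N) → Fin (msgCard T (R i)) =>
        C.dec (fun t => receivedAt net C w none t) = w).card ≤
      (∏ i ∈ Sᶜ, msgCard T (R i)) *
        (Nat.card ↥(LinearMap.range (cutMatrix net S).mulVecLin)) ^ T := by
  classical
  haveI : Fintype ↥(LinearMap.range (cutMatrix net S).mulVecLin) := Fintype.ofFinite _
  have hcard : Fintype.card (((i : ↥(Sᶜ)) → Fin (msgCard T (R i.1))) ×
        (Fin T → ↥(LinearMap.range (cutMatrix net S).mulVecLin)))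
      = (∏ i ∈ Sᶜ, msgCard T (R i)) *
        (Nat.card ↥(LinearMap.range (cutMatrix net S).mulVecLin)) ^ T := by
    rw [Fintype.card_prod, Fintype.card_pi, Fintype.card_fun, Fintype.card_fin,
      ← Finset.prod_coe_sort (Sᶜ) (fun i => msgCard T (R i)), Nat.card_eq_fintype_card]
    simp only [Fintype.card_fin]
  rw [← hcard, ← Finset.card_univ]
  refine Finset.card_le_card_of_injOn
    (fun w => (fun i => w i.1, fun t : Fin T => ⟨cutsig net C S w t, cutsig_mem net C S w t⟩))
    (fun _ _ => Finset.mem_univ _) ?_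
  intro w hw w' hw' heq
  rw [Finset.coe_filter, Set.mem_setOf_eq] at hw hw'
  have hout : ∀ i ∉ S, w i = w' i := fun i hi =>
    congrFun (congrArg Prod.fst heq) ⟨i, Finset.mem_compl.mpr hi⟩
  have hcutall : ∀ t : ℕ, cutsig net C S w t = cutsig net C S w' t := by
    intro t
    by_cases h : t < T
    · exact Subtype.ext_iff.mp (congrFun (congrArg Prod.snd heq) ⟨t, h⟩)
    · unfold cutsig
      have harg : (fun ic : (↥S) × Fin q => transmit net C w t ic.1.1 ic.2)
          = (fun ic : (↥S) × Fin q => transmit net C w' t ic.1.1 ic.2) := by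
        funext ic
        rw [show transmit net C w t ic.1.1 = 0 from by rw [transmit_eq, dif_neg h],
          show transmit net C w' t ic.1.1 = 0 from by rw [transmit_eq, dif_neg h]]
      rw [harg]
  have hcut := cut_sums_eq_of_cutsig_eq net C S w w' hcutall
  have hrec : (fun t : Fin T => receivedAt net C w none (t : ℕ))
      = (fun t : Fin T => receivedAt net C w' none (t : ℕ)) := by
    funext t
    exact receivedAt_congr net C S w w' hout hcut none (by simp) t
  rw [← hw.2, ← hw'.2, hrec]

end AuxProof2
section AuxProof3

variable {N q : ℕ} (net : LFFDNet N q) {T : ℕ} {R : Fin N → ℝ} (C : Code net T R)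

lemma msgCard_pos (T : ℕ) (r : ℝ) : 0 < msgCard T r :=
  Nat.ceil_pos.mpr (Real.rpow_pos_of_pos two_pos _)

lemma nat_card_range_eq (S : Finset (Fin N)) :
    Nat.card ↥(LinearMap.range (cutMatrix net S).mulVecLin) = 2 ^ (cutMatrix net S).rank := by
  haveI : Fintype ↥(LinearMap.range (cutMatrix net S).mulVecLin) := Fintype.ofFinite _
  rw [Nat.card_eq_fintype_card, Module.card_eq_pow_finrank (K := ZMod 2), ZMod.card]
  rfl

lemma code_bound (S : Finset (Fin N)) :
    (1 - Perr net C) * (2:ℝ) ^ ((T:ℝ) * ∑ i ∈ S, R i) ≤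
      (((2:ℝ) ^ (cutMatrix net S).rank) ^ T : ℝ) := by
  classical
  set W : ℕ := Fintype.card ((i : Fin N) → Fin (msgCard T (R i))) with hW
  have hWprod : W = ∏ i, msgCard T (R i) := by
    rw [hW, Fintype.card_pi]
    simp only [Fintype.card_fin]
  have hWpos : 0 < W := by
    rw [hWprod]; exact Finset.prod_pos fun i _ => msgCard_pos T (R i)
  have hWposR : (0:ℝ) < W := by exact_mod_cast hWpos
  set G := Finset.univ.filter fun w : (i : Fin N) → Fin (msgCard T (R i)) =>
      C.dec (fun t => receivedAt net C w none t) = w with hG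
  have hsplit : G.card + (Finset.univ.filter fun w : (i : Fin N) → Fin (msgCard T (R i)) =>
      C.dec (fun t => receivedAt net C w none t) ≠ w).card = W := by
    rw [hG, hW, ← Finset.card_univ]
    have := Finset.card_filter_add_card_filter_not
      (s := (Finset.univ : Finset ((i : Fin N) → Fin (msgCard T (R i)))))
      (p := fun w => C.dec (fun t => receivedAt net C w none t) = w)
    simpa [ne_eq] using this
  have hperr : 1 - Perr net C = (G.card : ℝ) / W := by
    unfold Perr
    rw [← hW]
    have hle : ((Finset.univ.filter fun w : (i : Fin N) → Fin (msgCard T (R i)) =>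
        C.dec (fun t => receivedAt net C w none t) ≠ w).card : ℝ) = (W : ℝ) - G.card := by
      have h' : ((G.card : ℕ) : ℝ) + ((Finset.univ.filter fun w :
          (i : Fin N) → Fin (msgCard T (R i)) =>
          C.dec (fun t => receivedAt net C w none t) ≠ w).card : ℝ) = (W : ℝ) := by
        exact_mod_cast congrArg (Nat.cast : ℕ → ℝ) hsplit
      linarith
    rw [hle]
    field_simp
    ring
  -- counting bound, in ℕ
  have h2 : G.card * ∏ i ∈ S, msgCard T (R i) ≤ W * (2 ^ (cutMatrix net S).rank) ^ T := by
    have h1 := good_card_le net C S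
    rw [nat_card_range_eq] at h1
    calc G.card * ∏ i ∈ S, msgCard T (R i)
        ≤ ((∏ i ∈ Sᶜ, msgCard T (R i)) * (2 ^ (cutMatrix net S).rank) ^ T) *
            ∏ i ∈ S, msgCard T (R i) := Nat.mul_le_mul_right _ h1
      _ = ((∏ i ∈ S, msgCard T (R i)) * ∏ i ∈ Sᶜ, msgCard T (R i)) *
            (2 ^ (cutMatrix net S).rank) ^ T := by ring
      _ = W * (2 ^ (cutMatrix net S).rank) ^ T := by
          rw [Finset.prod_mul_prod_compl, hWprod]
  have hcountR : (G.card : ℝ) * ∏ i ∈ S, (msgCard T (R i) : ℝ) ≤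
      (W : ℝ) * ((2:ℝ) ^ (cutMatrix net S).rank) ^ T := by
    exact_mod_cast h2
  have hpow : (2:ℝ) ^ ((T:ℝ) * ∑ i ∈ S, R i) ≤ ∏ i ∈ S, (msgCard T (R i) : ℝ) := by
    rw [Finset.mul_sum, Real.rpow_sum_of_pos two_pos]
    exact Finset.prod_le_prod (fun i _ => (Real.rpow_pos_of_pos two_pos _).le)
      (fun i _ => Nat.le_ceil _)
  rw [hperr]
  calc (G.card : ℝ) / W * (2:ℝ) ^ ((T:ℝ) * ∑ i ∈ S, R i)
      ≤ (G.card : ℝ) / W * ∏ i ∈ S, (msgCard T (R i) : ℝ) :=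
        mul_le_mul_of_nonneg_left hpow (div_nonneg (Nat.cast_nonneg _) hWposR.le)
    _ = (G.card : ℝ) * (∏ i ∈ S, (msgCard T (R i) : ℝ)) / W := by ring
    _ ≤ (W : ℝ) * ((2:ℝ) ^ (cutMatrix net S).rank) ^ T / W :=
        (div_le_div_iff_of_pos_right hWposR).mpr hcountR
    _ = ((2:ℝ) ^ (cutMatrix net S).rank) ^ T := by field_simp

end AuxProof3

/-- **Converse part of Theorem 1**: any achievable rate tuple satisfies all the cut-set
inequalities `∑_{i ∈ S} R_i ≤ rank G_{S,Sᶜ}`. -/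
theorem achievable_rate_le_cutset_rank {N q : ℕ} (net : LFFDNet N q) (R : Fin N → ℝ)
    (hach : Achievable net R) :
    ∀ S : Finset (Fin N), S.Nonempty →
      ∑ i ∈ S, R i ≤ ((cutMatrix net S).rank : ℝ) := by
  intro S _
  obtain ⟨-, Tk, Ck, hT, hP⟩ := hach
  by_contra hlt
  push_neg at hlt
  set r : ℝ := ((cutMatrix net S).rank : ℝ) with hr
  set δ : ℝ := (∑ i ∈ S, R i) - r with hδ
  have hδpos : 0 < δ := by simp [hδ]; linarith
  set a : ℝ := (2:ℝ) ^ (-δ) with ha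
  have ha0 : 0 < a := Real.rpow_pos_of_pos two_pos _
  have ha1 : a < 1 := Real.rpow_lt_one_of_one_lt_of_neg one_lt_two (by linarith)
  have hbound : ∀ k, 1 - Perr net (Ck k) ≤ a ^ (Tk k) := by
    intro k
    have hb := code_bound net (Ck k) S
    set T := Tk k
    have hrhs : (((2:ℝ) ^ (cutMatrix net S).rank) ^ T : ℝ) = (2:ℝ) ^ (r * T) := by
      rw [← pow_mul, ← Real.rpow_natCast (2:ℝ) ((cutMatrix net S).rank * T)]
      push_cast
      ring_nf
      rw [hr, mul_comm]
    rw [hrhs] at hb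
    have hexp : (2:ℝ) ^ (r * (T:ℝ)) / (2:ℝ) ^ ((T:ℝ) * ∑ i ∈ S, R i) = a ^ T := by
      rw [← Real.rpow_sub two_pos]
      have : r * (T:ℝ) - (T:ℝ) * ∑ i ∈ S, R i = (-δ) * T := by
        rw [hδ]; ring
      rw [this, Real.rpow_mul (by norm_num : (0:ℝ) ≤ 2), ← ha, Real.rpow_natCast]
    rw [← hexp]
    rw [le_div_iff₀ (Real.rpow_pos_of_pos two_pos _)]
    exact hb
  have h1 : Tendsto (fun k => 1 - Perr net (Ck k)) atTop (𝓝 1) := by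
    simpa using tendsto_const_nhds.sub hP
  have h2 : Tendsto (fun k => a ^ (Tk k)) atTop (𝓝 0) :=
    (tendsto_pow_atTop_nhds_zero_of_lt_one ha0.le ha1).comp hT
  have : (1:ℝ) ≤ 0 := le_of_tendsto_of_tendsto' h1 h2 hbound
  linarith
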